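/- For every a in the interior of Γ and every z ∈ K: ℙ_z(τ_a = ∞) > 0, i.e. the twisted walk S_a started at z stays in K forever with positive probability; equivalently 𝔼_z[e^{a·(S(τ)−z)}; τ < ∞] < 1. -/

import Mathlib

open scoped ENNReal Classical

noncomputable section

namespace KilledRW

/-- The two-dimensional integer lattice. -/
abbrev Z2 := ℤ × ℤ

/-- The plane `ℝ²`. -/
abbrev R2 := ℝ × ℝ

/-- Euclidean dot product on `ℝ²`. -/
def dotR (a b : R2) : ℝ := a.1 * b.1 + a.2 * b.2

/-- Embedding of the lattice into the plane. -/
def emb (z : Z2) : R2 := ((z.1 : ℝ), (z.2 : ℝ))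

/-- Euclidean norm on `ℝ²`. -/
def nrm (x : R2) : ℝ := Real.sqrt (dotR x x)

/-- The jump generating function `φ(a) = Σ_z γ(z) e^{a·z}`. -/
def jgf (γ : Z2 → ℝ) (a : R2) : ℝ := ∑' z : Z2, γ z * Real.exp (dotR a (emb z))

/-- The gradient `∇φ(a) = Σ_z z γ(z) e^{a·z}` of the jump generating function. -/
def gradJgf (γ : Z2 → ℝ) (a : R2) : R2 :=
  (∑' z : Z2, γ z * Real.exp (dotR a (emb z)) * (z.1 : ℝ),
   ∑' z : Z2, γ z * Real.exp (dotR a (emb z)) * (z.2 : ℝ))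

/-- The normalized gradient `q(a) = ∇φ(a)/|∇φ(a)|`. -/
def qmap (γ : Z2 → ℝ) (a : R2) : R2 := (nrm (gradJgf γ a))⁻¹ • gradJgf γ a

/-- (Sub)stochastic transition kernel of the twisted random walk `S_a`:
`p_a(z,z') = γ(z'-z) e^{a·(z'-z)}`.  For `a = 0` this is the kernel of the original walk. -/
def twKer (γ : Z2 → ℝ) (a : R2) (z z' : Z2) : ℝ≥0∞ :=
  ENNReal.ofReal (γ (z' - z) * Real.exp (dotR a (emb (z' - z))))

/-- `n`-step transition probabilities of the (sub)stochastic kernel `κ`. -/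
def nstep (κ : Z2 → Z2 → ℝ≥0∞) : ℕ → Z2 → Z2 → ℝ≥0∞
  | 0, z, z' => if z' = z then 1 else 0
  | n + 1, z, z' => ∑' w : Z2, κ z w * nstep κ n w z'

/-- `exitP κ A n z z' = ℙ_z(τ_A = n, S(n) = z')`: the probability that the walk with kernel `κ`
started at `z` stays in `A` strictly before time `n` and is at `z' ∉ A` at time `n`
(where `τ_A = inf{n ≥ 0 : S(n) ∉ A}`). -/
def exitP (κ : Z2 → Z2 → ℝ≥0∞) (A : Set Z2) : ℕ → Z2 → Z2 → ℝ≥0∞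
  | 0, z, z' => if z' = z ∧ z ∉ A then 1 else 0
  | n + 1, z, z' => if z ∈ A then ∑' w : Z2, κ z w * exitP κ A n w z' else 0

/-- `aliveP κ A n z z' = ℙ_z(τ_A > n, S(n) = z')`. -/
def aliveP (κ : Z2 → Z2 → ℝ≥0∞) (A : Set Z2) : ℕ → Z2 → Z2 → ℝ≥0∞
  | 0, z, z' => if z' = z ∧ z ∈ A then 1 else 0
  | n + 1, z, z' => if z ∈ A then ∑' w : Z2, κ z w * aliveP κ A n w z' else 0

/-- `ℙ_z(τ_A < ∞)` for the walk with kernel `κ`. -/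
def exitTotal (κ : Z2 → Z2 → ℝ≥0∞) (A : Set Z2) (z : Z2) : ℝ≥0∞ :=
  ∑' n : ℕ, ∑' z' : Z2, exitP κ A n z z'

/-- `𝔼_z[g(S(τ_A)); τ_A < ∞]` for a nonnegative integrand, with values in `ℝ≥0∞`. -/
def exitLExp (κ : Z2 → Z2 → ℝ≥0∞) (A : Set Z2) (z : Z2) (g : Z2 → ℝ) : ℝ≥0∞ :=
  ∑' n : ℕ, ∑' z' : Z2, exitP κ A n z z' * ENNReal.ofReal (g z')

/-- `𝔼_z[g(S(τ_A)); τ_A < ∞]` for a signed integrand (positive part minus negative part). -/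
def exitExp (κ : Z2 → Z2 → ℝ≥0∞) (A : Set Z2) (z : Z2) (g : Z2 → ℝ) : ℝ :=
  (exitLExp κ A z g).toReal - (exitLExp κ A z fun w => -g w).toReal

/-- `𝔼_z[g(S(τ_A)); τ_A ≤ n]`, nonnegative version. -/
def exitLExpTrunc (κ : Z2 → Z2 → ℝ≥0∞) (A : Set Z2) (z : Z2) (g : Z2 → ℝ) (n : ℕ) : ℝ≥0∞ :=
  ∑ m ∈ Finset.range (n + 1), ∑' z' : Z2, exitP κ A m z z' * ENNReal.ofReal (g z')

/-- `𝔼_z[g(S(τ_A)); τ_A ≤ n]`, signed version. -/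
def exitExpTrunc (κ : Z2 → Z2 → ℝ≥0∞) (A : Set Z2) (z : Z2) (g : Z2 → ℝ) (n : ℕ) : ℝ :=
  (exitLExpTrunc κ A z g n).toReal - (exitLExpTrunc κ A z (fun w => -g w) n).toReal

/-- `𝔼_z[g(S(n)); τ_A > n]`, nonnegative version. -/
def aliveLExpAt (κ : Z2 → Z2 → ℝ≥0∞) (A : Set Z2) (z : Z2) (g : Z2 → ℝ) (n : ℕ) : ℝ≥0∞ :=
  ∑' z' : Z2, aliveP κ A n z z' * ENNReal.ofReal (g z')

/-- `𝔼_z[g(S(n)); τ_A > n]`, signed version. -/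
def aliveExpAt (κ : Z2 → Z2 → ℝ≥0∞) (A : Set Z2) (z : Z2) (g : Z2 → ℝ) (n : ℕ) : ℝ :=
  (aliveLExpAt κ A z g n).toReal - (aliveLExpAt κ A z (fun w => -g w) n).toReal


section Kernel

variable (κ : Z2 → Z2 → ℝ≥0∞) (A : Set Z2)

lemma aliveP_ne_zero_mem {n z z'} (h : aliveP κ A n z z' ≠ 0) : z' ∈ A := by
  induction n generalizing z with
  | zero =>
    by_cases hc : z' = z ∧ z ∈ A
    · exact hc.1 ▸ hc.2
    · rw [aliveP, if_neg hc] at h; exact absurd rfl h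
  | succ n ih =>
    rw [aliveP] at h
    by_cases hz : z ∈ A
    · simp only [hz, if_true] at h
      obtain ⟨w, hw⟩ : ∃ w, κ z w * aliveP κ A n w z' ≠ 0 := by
        by_contra hall; push_neg at hall
        exact h (by simp [hall])
      exact ih fun h0 => hw (by rw [h0, mul_zero])
    · rw [if_neg hz] at h; exact absurd rfl h

lemma aliveP_of_not_mem {n z z'} (h : z ∉ A) : aliveP κ A n z z' = 0 := by
  cases n with
  | zero => rw [aliveP, if_neg (fun hc => h hc.2)]
  | succ n => rw [aliveP, if_neg h]

lemma exitP_of_not_mem {n z z'} (h : z ∉ A) :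
    exitP κ A (n+1) z z' = 0 := by rw [exitP, if_neg h]

/-- reverse Chapman for alive -/
lemma aliveP_succ_right (n : ℕ) (z z' : Z2) :
    aliveP κ A (n+1) z z' =
      if z' ∈ A then ∑' w : Z2, aliveP κ A n z w * κ w z' else 0 := by
  induction n generalizing z with
  | zero =>
    rw [aliveP]
    by_cases hz : z ∈ A
    · simp only [hz, if_true]
      by_cases hz' : z' ∈ A
      · simp only [hz', if_true]
        rw [show ∑' w : Z2, κ z w * aliveP κ A 0 w z'
            = ∑' w : Z2, (if w = z' then κ z z' else 0) from tsum_congr fun w => by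
          by_cases hw : w = z'
          · subst hw; rw [aliveP, if_pos ⟨rfl, hz'⟩, mul_one, if_pos rfl]
          · rw [aliveP, if_neg (fun hc => hw hc.1.symm), mul_zero, if_neg hw]]
        rw [show ∑' w : Z2, aliveP κ A 0 z w * κ w z'
            = ∑' w : Z2, (if w = z then κ z z' else 0) from tsum_congr fun w => by
          by_cases hw : w = z
          · subst hw; rw [aliveP, if_pos ⟨rfl, hz⟩, one_mul, if_pos rfl]
          · rw [aliveP, if_neg (fun hc => hw hc.1), zero_mul, if_neg hw]]
        rw [tsum_ite_eq, tsum_ite_eq]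
      · simp only [hz', if_false]
        rw [show ∑' w : Z2, κ z w * aliveP κ A 0 w z' = ∑' w : Z2, (0:ℝ≥0∞) from
          tsum_congr fun w => by
            rw [aliveP, if_neg (fun (hc : z' = w ∧ w ∈ A) => hz' (hc.1 ▸ hc.2)), mul_zero]]
        simp
    · simp only [hz, if_false]
      by_cases hz' : z' ∈ A
      · simp only [hz', if_true]
        rw [show ∑' w : Z2, aliveP κ A 0 z w * κ w z' = ∑' w : Z2, (0:ℝ≥0∞) from
          tsum_congr fun w => by rw [aliveP, if_neg (fun hc => hz hc.2), zero_mul]]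
        simp
      · simp [hz']
  | succ n ih =>
    rw [aliveP]
    by_cases hz : z ∈ A
    · simp only [hz, if_true]
      calc ∑' w : Z2, κ z w * aliveP κ A (n+1) w z'
          = ∑' w : Z2, κ z w * (if z' ∈ A then ∑' v : Z2, aliveP κ A n w v * κ v z' else 0) := by
            exact tsum_congr fun w => by rw [ih]
        _ = if z' ∈ A then ∑' w : Z2, aliveP κ A (n+1) z w * κ w z' else 0 := by
            by_cases hz' : z' ∈ A
            · simp only [hz', if_true]
              calc ∑' w : Z2, κ z w * ∑' v : Z2, aliveP κ A n w v * κ v z'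
                  = ∑' w : Z2, ∑' v : Z2, κ z w * aliveP κ A n w v * κ v z' := by
                    exact tsum_congr fun w => by
                      rw [← ENNReal.tsum_mul_left]
                      exact tsum_congr fun v => by ring
                _ = ∑' v : Z2, (∑' w : Z2, κ z w * aliveP κ A n w v) * κ v z' := by
                    rw [ENNReal.tsum_comm]
                    exact tsum_congr fun v => by rw [ENNReal.tsum_mul_right]
                _ = ∑' v : Z2, aliveP κ A (n+1) z v * κ v z' := by
                    exact tsum_congr fun v => by rw [aliveP, if_pos hz]
            · simp only [hz', if_false]
              simp
    · simp only [hz, if_false]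
      by_cases hz' : z' ∈ A
      · simp only [hz', if_true]
        rw [show ∑' w : Z2, aliveP κ A (n+1) z w * κ w z' = ∑' w : Z2, (0:ℝ≥0∞) from
          tsum_congr fun w => by rw [aliveP, if_neg hz, zero_mul]]
        simp
      · simp [hz']

/-- exit via alive -/
lemma exitP_succ_right (n : ℕ) (z z' : Z2) :
    exitP κ A (n+1) z z' =
      if z' ∉ A then ∑' w : Z2, aliveP κ A n z w * κ w z' else 0 := by
  induction n generalizing z with
  | zero =>
    rw [exitP]
    by_cases hz : z ∈ A
    · simp only [hz, if_true]
      by_cases hz' : z' ∈ A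
      · simp only [hz', not_true, if_false]
        rw [show ∑' w : Z2, κ z w * exitP κ A 0 w z' = ∑' w : Z2, (0:ℝ≥0∞) from
          tsum_congr fun w => by
            rw [exitP, if_neg (fun hc => hc.2 (hc.1 ▸ hz')), mul_zero]]
        simp
      · simp only [hz', not_false_iff, if_true]
        rw [show ∑' w : Z2, κ z w * exitP κ A 0 w z'
            = ∑' w : Z2, (if w = z' then κ z z' else 0) from tsum_congr fun w => by
          by_cases hw : w = z'
          · subst hw; rw [exitP, if_pos ⟨rfl, hz'⟩, mul_one, if_pos rfl]
          · rw [exitP, if_neg (fun hc => hw hc.1.symm), mul_zero, if_neg hw]]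
        rw [show ∑' w : Z2, aliveP κ A 0 z w * κ w z'
            = ∑' w : Z2, (if w = z then κ z z' else 0) from tsum_congr fun w => by
          by_cases hw : w = z
          · subst hw; rw [aliveP, if_pos ⟨rfl, hz⟩, one_mul, if_pos rfl]
          · rw [aliveP, if_neg (fun hc => hw hc.1), zero_mul, if_neg hw]]
        rw [tsum_ite_eq, tsum_ite_eq]
    · simp only [hz, if_false]
      by_cases hz' : z' ∈ A
      · simp [hz']
      · simp only [hz', not_false_iff, if_true]
        rw [show ∑' w : Z2, aliveP κ A 0 z w * κ w z' = ∑' w : Z2, (0:ℝ≥0∞) from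
          tsum_congr fun w => by rw [aliveP, if_neg (fun hc => hz hc.2), zero_mul]]
        simp
  | succ n ih =>
    rw [exitP]
    by_cases hz : z ∈ A
    · simp only [hz, if_true]
      calc ∑' w : Z2, κ z w * exitP κ A (n+1) w z'
          = ∑' w : Z2, κ z w * (if z' ∉ A then ∑' v : Z2, aliveP κ A n w v * κ v z' else 0) := by
            exact tsum_congr fun w => by rw [ih]
        _ = if z' ∉ A then ∑' w : Z2, aliveP κ A (n+1) z w * κ w z' else 0 := by
            by_cases hz' : z' ∈ A
            · simp only [hz', not_true, if_false]; simp
            · simp only [hz', not_false_iff, if_true]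
              calc ∑' w : Z2, κ z w * ∑' v : Z2, aliveP κ A n w v * κ v z'
                  = ∑' w : Z2, ∑' v : Z2, κ z w * aliveP κ A n w v * κ v z' := by
                    exact tsum_congr fun w => by
                      rw [← ENNReal.tsum_mul_left]
                      exact tsum_congr fun v => by ring
                _ = ∑' v : Z2, (∑' w : Z2, κ z w * aliveP κ A n w v) * κ v z' := by
                    rw [ENNReal.tsum_comm]
                    exact tsum_congr fun v => by rw [ENNReal.tsum_mul_right]
                _ = ∑' v : Z2, aliveP κ A (n+1) z v * κ v z' := by
                    exact tsum_congr fun v => by rw [aliveP, if_pos hz]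
    · simp only [hz, if_false]
      by_cases hz' : z' ∈ A
      · simp [hz']
      · simp only [hz', not_false_iff, if_true]
        rw [show ∑' w : Z2, aliveP κ A (n+1) z w * κ w z' = ∑' w : Z2, (0:ℝ≥0∞) from
          tsum_congr fun w => by rw [aliveP, if_neg hz, zero_mul]]
        simp

/-- alive semigroup -/
lemma aliveP_add (n k : ℕ) (z z' : Z2) :
    aliveP κ A (n + k) z z' = ∑' w : Z2, aliveP κ A n z w * aliveP κ A k w z' := by
  induction n generalizing z with
  | zero =>
    simp only [Nat.zero_add]
    rw [show ∑' w : Z2, aliveP κ A 0 z w * aliveP κ A k w z'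
        = ∑' w : Z2, (if w = z then aliveP κ A k z z' else 0) from tsum_congr fun w => by
      by_cases hw : w = z
      · subst hw
        by_cases hz : w ∈ A
        · rw [aliveP, if_pos ⟨rfl, hz⟩, one_mul, if_pos rfl]
        · rw [aliveP, if_neg (fun (hc : w = w ∧ w ∈ A) => hz hc.2), zero_mul, if_pos rfl,
            aliveP_of_not_mem κ A hz]
      · rw [aliveP, if_neg (fun (hc : w = z ∧ z ∈ A) => hw hc.1), zero_mul, if_neg hw]]
    rw [tsum_ite_eq]
  | succ n ih =>
    have : n + 1 + k = (n + k) + 1 := by omega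
    rw [this, aliveP]
    by_cases hz : z ∈ A
    · simp only [hz, if_true]
      calc ∑' w : Z2, κ z w * aliveP κ A (n+k) w z'
          = ∑' w : Z2, ∑' v : Z2, κ z w * aliveP κ A n w v * aliveP κ A k v z' := by
            exact tsum_congr fun w => by
              rw [ih, ← ENNReal.tsum_mul_left]
              exact tsum_congr fun v => by ring
        _ = ∑' v : Z2, (∑' w : Z2, κ z w * aliveP κ A n w v) * aliveP κ A k v z' := by
            rw [ENNReal.tsum_comm]
            exact tsum_congr fun v => by rw [ENNReal.tsum_mul_right]
        _ = ∑' v : Z2, aliveP κ A (n+1) z v * aliveP κ A k v z' := by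
            exact tsum_congr fun v => by rw [aliveP, if_pos hz]
    · simp only [hz, if_false]
      rw [show ∑' w : Z2, aliveP κ A (n+1) z w * aliveP κ A k w z' = ∑' w : Z2, (0:ℝ≥0∞) from
        tsum_congr fun w => by rw [aliveP, if_neg hz, zero_mul]]
      simp

/-- exit split -/
lemma exitP_split (n k : ℕ) (z z' : Z2) :
    exitP κ A (n + (k+1)) z z' = ∑' w : Z2, aliveP κ A n z w * exitP κ A (k+1) w z' := by
  have h1 : n + (k+1) = (n + k) + 1 := by omega
  rw [h1, exitP_succ_right]
  by_cases hz' : z' ∈ A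
  · simp only [hz', not_true, if_false]
    rw [show ∑' w : Z2, aliveP κ A n z w * exitP κ A (k+1) w z' = ∑' w : Z2, (0:ℝ≥0∞) from
      tsum_congr fun w => by rw [exitP_succ_right, if_neg (fun hc => hc hz'), mul_zero]]
    simp
  · simp only [hz', not_false_iff, if_true]
    calc ∑' w : Z2, aliveP κ A (n+k) z w * κ w z'
        = ∑' w : Z2, (∑' v : Z2, aliveP κ A n z v * aliveP κ A k v w) * κ w z' := by
          exact tsum_congr fun w => by rw [aliveP_add]
      _ = ∑' w : Z2, ∑' v : Z2, aliveP κ A n z v * (aliveP κ A k v w * κ w z') := by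
          exact tsum_congr fun w => by
            rw [← ENNReal.tsum_mul_right]
            exact tsum_congr fun v => by ring
      _ = ∑' v : Z2, aliveP κ A n z v * ∑' w : Z2, aliveP κ A k v w * κ w z' := by
          rw [ENNReal.tsum_comm]
          exact tsum_congr fun v => by rw [ENNReal.tsum_mul_left]
      _ = ∑' v : Z2, aliveP κ A n z v * exitP κ A (k+1) v z' := by
          exact tsum_congr fun v => by
            rw [exitP_succ_right, if_pos hz']

section stoch
variable (hκ : ∀ w : Z2, ∑' z' : Z2, κ w z' = 1)
include hκ

/-- conservation -/
lemma conservation (n : ℕ) (z : Z2) :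
    (∑ m ∈ Finset.range (n+1), ∑' z' : Z2, exitP κ A m z z')
      + ∑' z' : Z2, aliveP κ A n z z' = 1 := by
  induction n generalizing z with
  | zero =>
    simp only [zero_add, Finset.sum_range_one]
    by_cases hz : z ∈ A
    · rw [show ∑' z' : Z2, exitP κ A 0 z z' = ∑' z' : Z2, (0:ℝ≥0∞) from
        tsum_congr fun z' => by rw [exitP, if_neg (fun hc => hc.2 hz)]]
      rw [show ∑' z' : Z2, aliveP κ A 0 z z'
          = ∑' z' : Z2, (if z' = z then (1:ℝ≥0∞) else 0) from
        tsum_congr fun z' => by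
          by_cases hw : z' = z
          · rw [aliveP, if_pos ⟨hw, hz⟩, if_pos hw]
          · rw [aliveP, if_neg (fun hc => hw hc.1), if_neg hw]]
      rw [tsum_ite_eq]; simp
    · rw [show ∑' z' : Z2, aliveP κ A 0 z z' = ∑' z' : Z2, (0:ℝ≥0∞) from
        tsum_congr fun z' => aliveP_of_not_mem κ A hz]
      rw [show ∑' z' : Z2, exitP κ A 0 z z'
          = ∑' z' : Z2, (if z' = z then (1:ℝ≥0∞) else 0) from
        tsum_congr fun z' => by
          by_cases hw : z' = z
          · rw [exitP, if_pos ⟨hw, hz⟩, if_pos hw]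
          · rw [exitP, if_neg (fun hc => hw hc.1), if_neg hw]]
      rw [tsum_ite_eq]; simp
  | succ n ih =>
    by_cases hz : z ∈ A
    · have hshift : ∀ m : ℕ, ∑' z' : Z2, exitP κ A (m+1) z z'
          = ∑' w : Z2, κ z w * ∑' z' : Z2, exitP κ A m w z' := by
        intro m
        rw [show ∑' z' : Z2, exitP κ A (m+1) z z'
            = ∑' z' : Z2, ∑' w : Z2, κ z w * exitP κ A m w z' from
          tsum_congr fun z' => by rw [exitP, if_pos hz]]
        rw [ENNReal.tsum_comm]
        exact tsum_congr fun w => ENNReal.tsum_mul_left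
      have hshiftA : ∑' z' : Z2, aliveP κ A (n+1) z z'
          = ∑' w : Z2, κ z w * ∑' z' : Z2, aliveP κ A n w z' := by
        rw [show ∑' z' : Z2, aliveP κ A (n+1) z z'
            = ∑' z' : Z2, ∑' w : Z2, κ z w * aliveP κ A n w z' from
          tsum_congr fun z' => by rw [aliveP, if_pos hz]]
        rw [ENNReal.tsum_comm]
        exact tsum_congr fun w => ENNReal.tsum_mul_left
      have h0 : ∑' z' : Z2, exitP κ A 0 z z' = 0 := by
        rw [show ∑' z' : Z2, exitP κ A 0 z z' = ∑' z' : Z2, (0:ℝ≥0∞) from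
          tsum_congr fun z' => by rw [exitP, if_neg (fun hc => hc.2 hz)]]
        simp
      rw [Finset.sum_range_succ']
      simp only [hshift, h0, add_zero, hshiftA]
      rw [← Summable.tsum_finsetSum (fun i _ => ENNReal.summable)]
      rw [← ENNReal.tsum_add]
      calc (∑' w : Z2, ((∑ m ∈ Finset.range (n+1), κ z w * ∑' z' : Z2, exitP κ A m w z')
              + κ z w * ∑' z' : Z2, aliveP κ A n w z'))
          = ∑' w : Z2, κ z w * ((∑ m ∈ Finset.range (n+1), ∑' z' : Z2, exitP κ A m w z')
              + ∑' z' : Z2, aliveP κ A n w z') := by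
            exact tsum_congr fun w => by rw [mul_add, Finset.mul_sum]
        _ = ∑' w : Z2, κ z w * 1 := tsum_congr fun w => by rw [ih]
        _ = 1 := by simp [hκ z]
    · have hA0 : ∑' z' : Z2, aliveP κ A (n+1) z z' = 0 := by
        rw [show ∑' z' : Z2, aliveP κ A (n+1) z z' = ∑' z' : Z2, (0:ℝ≥0∞) from
          tsum_congr fun z' => aliveP_of_not_mem κ A hz]
        simp
      have hAn : ∑' z' : Z2, aliveP κ A n z z' = 0 := by
        rw [show ∑' z' : Z2, aliveP κ A n z z' = ∑' z' : Z2, (0:ℝ≥0∞) from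
          tsum_congr fun z' => aliveP_of_not_mem κ A hz]
        simp
      have hE : ∑' z' : Z2, exitP κ A (n+1) z z' = 0 := by
        rw [show ∑' z' : Z2, exitP κ A (n+1) z z' = ∑' z' : Z2, (0:ℝ≥0∞) from
          tsum_congr fun z' => exitP_of_not_mem κ A hz]
        simp
      rw [Finset.sum_range_succ, hE, add_zero, hA0, add_zero]
      have h := ih z
      rw [hAn, add_zero] at h
      exact h

lemma exitTotal_le_one (z : Z2) : exitTotal κ A z ≤ 1 := by
  rw [exitTotal]
  refine Summable.tsum_le_of_sum_le ENNReal.summable ?_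
  intro s
  rcases s.eq_empty_or_nonempty with rfl | hs
  · simp
  · obtain ⟨n, hn⟩ := s.exists_le
    calc ∑ m ∈ s, ∑' z' : Z2, exitP κ A m z z'
        ≤ ∑ m ∈ Finset.range (n+1), ∑' z' : Z2, exitP κ A m z z' := by
          apply Finset.sum_le_sum_of_subset
          intro m hm
          exact Finset.mem_range.mpr (Nat.lt_succ_of_le (hn m hm))
      _ ≤ 1 := by
          rw [← conservation κ A hκ n z]
          exact le_self_add

set_option maxHeartbeats 1000000 in
/-- decomposition of exitTotal at time n -/
lemma exitTotal_decomp (n : ℕ) (z : Z2) :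
    exitTotal κ A z = (∑ m ∈ Finset.range (n+1), ∑' z' : Z2, exitP κ A m z z')
      + ∑' w : Z2, aliveP κ A n z w * exitTotal κ A w := by
  rw [exitTotal]
  rw [← Summable.sum_add_tsum_nat_add' (f := fun m => ∑' z' : Z2, exitP κ A m z z') (k := n+1)
    ENNReal.summable]
  congr 1
  calc ∑' k : ℕ, ∑' z' : Z2, exitP κ A (k + (n+1)) z z'
      = ∑' k : ℕ, ∑' z' : Z2, ∑' w : Z2, aliveP κ A n z w * exitP κ A (k+1) w z' := by
        refine tsum_congr fun k => tsum_congr fun z' => ?_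
        rw [show k + (n+1) = n + (k+1) by omega, exitP_split]
    _ = ∑' k : ℕ, ∑' w : Z2, aliveP κ A n z w * ∑' z' : Z2, exitP κ A (k+1) w z' := by
        refine tsum_congr fun k => ?_
        rw [ENNReal.tsum_comm]
        exact tsum_congr fun w => ENNReal.tsum_mul_left
    _ = ∑' w : Z2, aliveP κ A n z w * ∑' k : ℕ, ∑' z' : Z2, exitP κ A (k+1) w z' := by
        rw [ENNReal.tsum_comm]
        exact tsum_congr fun w => ENNReal.tsum_mul_left
    _ = ∑' w : Z2, aliveP κ A n z w * exitTotal κ A w := by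
        refine tsum_congr fun w => ?_
        by_cases hw : aliveP κ A n z w = 0
        · rw [hw, zero_mul, zero_mul]
        · congr 1
          have hwA : w ∈ A := aliveP_ne_zero_mem κ A hw
          have h0 : ∑' z' : Z2, exitP κ A 0 w z' = 0 := by
            rw [show ∑' z' : Z2, exitP κ A 0 w z' = ∑' z' : Z2, (0:ℝ≥0∞) from
              tsum_congr fun z' => by rw [exitP, if_neg (fun hc => hc.2 hwA)]]
            simp
          have hsplit := tsum_eq_zero_add'
            (f := fun m => ∑' z' : Z2, exitP κ A m w z') ENNReal.summable
          rw [exitTotal, hsplit, h0, zero_add]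

end stoch

end Kernel

section RealAux

lemma dotR_emb_add (p : R2) (x y : Z2) :
    dotR p (emb (x + y)) = dotR p (emb x) + dotR p (emb y) := by
  simp only [dotR, emb, Prod.fst_add, Prod.snd_add]
  push_cast
  ring

lemma dotR_emb_zero (p : R2) : dotR p (emb 0) = 0 := by
  simp [dotR, emb]

lemma dotR_add_left (p q : R2) (x : R2) : dotR (p + q) x = dotR p x + dotR q x := by
  simp only [dotR, Prod.fst_add, Prod.snd_add]; ring

lemma dotR_sub_smul (p fv : R2) (bb : ℝ) (x : R2) :
    dotR (p - bb • fv) x = dotR p x - bb * dotR fv x := by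
  simp only [dotR, Prod.fst_sub, Prod.snd_sub, Prod.smul_fst, Prod.smul_snd, smul_eq_mul]
  ring

lemma dotR_smul_right (p : R2) (c : ℝ) (x : R2) : dotR p (c • x) = c * dotR p x := by
  simp only [dotR, Prod.smul_fst, Prod.smul_snd, smul_eq_mul]; ring

lemma dotR_smul_left (p : R2) (c : ℝ) (x : R2) : dotR (c • p) x = c * dotR p x := by
  simp only [dotR, Prod.smul_fst, Prod.smul_snd, smul_eq_mul]; ring

lemma sq_le_exp (x : ℝ) (hx : 0 ≤ x) : x^2 ≤ Real.exp x := by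
  have h := Real.add_one_le_exp (x/4)
  have h4 : Real.exp x = (Real.exp (x/4))^4 := by
    rw [← Real.exp_nat_mul]; ring_nf
  have hp : 0 ≤ x/4 + 1 := by linarith
  have h2 : (x/4+1)^4 ≤ (Real.exp (x/4))^4 := by
    apply pow_le_pow_left₀ hp (by linarith)
  nlinarith [sq_nonneg (1 - x/4), sq_nonneg x, sq_nonneg (x/4+1)]

lemma exp_abs_le (t : ℝ) : Real.exp |t| ≤ Real.exp t + Real.exp (-t) := by
  rcases abs_cases t with ⟨h, _⟩ | ⟨h, _⟩
  · rw [h]; nlinarith [Real.exp_pos (-t)]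
  · rw [h]; nlinarith [Real.exp_pos t]

lemma abs_le_exps (t : ℝ) : |t| ≤ Real.exp t + Real.exp (-t) := by
  have h1 : |t| + 1 ≤ Real.exp |t| := Real.add_one_le_exp _
  have := exp_abs_le t
  linarith

lemma sq_le_exps (t : ℝ) : t^2 ≤ Real.exp t + Real.exp (-t) := by
  have h1 : t^2 = |t|^2 := (sq_abs t).symm
  have h2 : |t|^2 ≤ Real.exp |t| := sq_le_exp _ (abs_nonneg t)
  have := exp_abs_le t
  linarith

lemma exp_le_quad (s : ℝ) : Real.exp s ≤ 1 + s + s^2 * (Real.exp s + Real.exp (-s)) := by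
  have he : Real.exp s * Real.exp (-s) = 1 := by rw [← Real.exp_add]; simp
  have h3 : (-s) + 1 ≤ Real.exp (-s) := Real.add_one_le_exp _
  have h2 : Real.exp s * ((-s) + 1) ≤ Real.exp s * Real.exp (-s) :=
    mul_le_mul_of_nonneg_left h3 (Real.exp_pos s).le
  have h2' : Real.exp s - 1 ≤ s * Real.exp s := by nlinarith
  rcases le_or_gt 0 s with h | h
  · nlinarith [mul_le_mul_of_nonneg_left h2' h, Real.exp_pos (-s), sq_nonneg s,
      mul_nonneg (mul_nonneg h h) (Real.exp_pos (-s)).le]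
  · have h1 : s + 1 ≤ Real.exp s := Real.add_one_le_exp _
    have h5 : s * Real.exp s ≤ s * (s+1) := by
      have := mul_le_mul_of_nonpos_left h1 h.le
      linarith
    have h6 : (1:ℝ) ≤ Real.exp (-s) := by linarith
    nlinarith [sq_nonneg s, Real.exp_pos s]

section gammaLemmas

variable {γ : Z2 → ℝ} (hγ0 : ∀ z : Z2, 0 ≤ γ z)
  (hA3 : ∀ p : R2, Summable fun z : Z2 => γ z * Real.exp (dotR p (emb z)))

include hγ0 hA3 in
lemma sum_dot (p fv : R2) :
    Summable (fun z : Z2 => γ z * Real.exp (dotR p (emb z)) * dotR fv (emb z)) := by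
  refine Summable.of_norm_bounded
    ((hA3 (p + fv)).add (hA3 (p - fv))) (fun z => ?_)
  have hnn : 0 ≤ γ z * Real.exp (dotR p (emb z)) :=
    mul_nonneg (hγ0 z) (Real.exp_pos _).le
  rw [Real.norm_eq_abs, abs_mul, abs_of_nonneg hnn]
  show _ ≤ γ z * Real.exp (dotR (p + fv) (emb z)) + γ z * Real.exp (dotR (p - fv) (emb z))
  have habs := abs_le_exps (dotR fv (emb z))
  have h1 : dotR (p + fv) (emb z) = dotR p (emb z) + dotR fv (emb z) := dotR_add_left _ _ _
  have h2 : dotR (p - fv) (emb z) = dotR p (emb z) - dotR fv (emb z) := by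
    have := dotR_sub_smul p fv 1 (emb z); simpa using this
  rw [h1, h2, Real.exp_add, Real.exp_sub]
  calc γ z * Real.exp (dotR p (emb z)) * |dotR fv (emb z)|
      ≤ γ z * Real.exp (dotR p (emb z))
        * (Real.exp (dotR fv (emb z)) + Real.exp (-dotR fv (emb z))) := by
        exact mul_le_mul_of_nonneg_left habs hnn
    _ = γ z * (Real.exp (dotR p (emb z)) * Real.exp (dotR fv (emb z)))
        + γ z * (Real.exp (dotR p (emb z)) * Real.exp (-(dotR fv (emb z)))) := by ring
    _ = γ z * (Real.exp (dotR p (emb z)) * Real.exp (dotR fv (emb z)))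
        + γ z * (Real.exp (dotR p (emb z)) / Real.exp (dotR fv (emb z))) := by
        rw [Real.exp_neg]; ring
    _ ≤ _ := le_rfl

include hγ0 hA3 in
lemma sum_dotsq (p fv : R2) :
    Summable (fun z : Z2 => γ z * Real.exp (dotR p (emb z)) * (dotR fv (emb z))^2
      * (Real.exp (dotR fv (emb z)) + Real.exp (-dotR fv (emb z)))) := by
  have hsum : Summable (fun z : Z2 => γ z * Real.exp (dotR (p + (2:ℝ) • fv) (emb z))
      + ((2:ℝ) * (γ z * Real.exp (dotR p (emb z)))
      + γ z * Real.exp (dotR (p - (2:ℝ) • fv) (emb z)))) :=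
    (hA3 _).add (((hA3 p).mul_left 2).add (hA3 _))
  refine Summable.of_nonneg_of_le (fun z => ?_) (fun z => ?_) hsum
  · have hnn : 0 ≤ γ z * Real.exp (dotR p (emb z)) := mul_nonneg (hγ0 z) (Real.exp_pos _).le
    have : 0 ≤ Real.exp (dotR fv (emb z)) + Real.exp (-dotR fv (emb z)) := by positivity
    positivity
  · set t := dotR fv (emb z) with ht
    have hnn : 0 ≤ γ z * Real.exp (dotR p (emb z)) := mul_nonneg (hγ0 z) (Real.exp_pos _).le
    have h1 : dotR (p + (2:ℝ) • fv) (emb z) = dotR p (emb z) + 2 * t := by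
      rw [dotR_add_left, dotR_smul_left]
    have h2 : dotR (p - (2:ℝ) • fv) (emb z) = dotR p (emb z) - 2 * t := dotR_sub_smul _ _ _ _
    rw [h1, h2, Real.exp_add, Real.exp_sub]
    have key2 : t^2 * (Real.exp t + Real.exp (-t))
        ≤ Real.exp (2*t) + 2 + Real.exp (-(2*t)) := by
      have hsq := sq_le_exps t
      have hmul : (Real.exp t + Real.exp (-t))^2 = Real.exp (2*t) + 2 + Real.exp (-(2*t)) := by
        have e1 : Real.exp t * Real.exp t = Real.exp (2*t) := by
          rw [← Real.exp_add]; ring_nf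
        have e2 : Real.exp (-t) * Real.exp (-t) = Real.exp (-(2*t)) := by
          rw [← Real.exp_add]; ring_nf
        have e3 : Real.exp t * Real.exp (-t) = 1 := by rw [← Real.exp_add]; simp
        nlinarith [e1, e2, e3]
      have hpos : 0 ≤ Real.exp t + Real.exp (-t) := by positivity
      nlinarith [mul_le_mul_of_nonneg_right hsq hpos]
    calc γ z * Real.exp (dotR p (emb z)) * t^2 * (Real.exp t + Real.exp (-t))
        = γ z * Real.exp (dotR p (emb z)) * (t^2 * (Real.exp t + Real.exp (-t))) := by ring
      _ ≤ γ z * Real.exp (dotR p (emb z)) * (Real.exp (2*t) + 2 + Real.exp (-(2*t))) :=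
          mul_le_mul_of_nonneg_left key2 hnn
      _ = γ z * (Real.exp (dotR p (emb z)) * Real.exp (2*t))
          + (2 * (γ z * Real.exp (dotR p (emb z)))
          + γ z * (Real.exp (dotR p (emb z)) * Real.exp (-(2*t)))) := by ring
      _ = _ := by
          rw [Real.exp_neg]
          ring

end gammaLemmas

end RealAux

section Tilt

variable (γ : Z2 → ℝ) (a : R2) (A : Set Z2)

lemma twKer_zero_eq (z w : Z2) : twKer γ 0 z w = ENNReal.ofReal (γ (w - z)) := by
  rw [twKer]
  have h0 : dotR (0 : R2) (emb (w - z)) = 0 := by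
    simp [dotR, Prod.fst_zero, Prod.snd_zero]
  rw [h0, Real.exp_zero, mul_one]

variable (hγ0 : ∀ z : Z2, 0 ≤ γ z)

include hγ0 in
lemma twKer_tilt (z w : Z2) :
    twKer γ a z w = ENNReal.ofReal (Real.exp (dotR a (emb (w - z)))) * twKer γ 0 z w := by
  rw [twKer, twKer_zero_eq, ← ENNReal.ofReal_mul (Real.exp_pos _).le]
  congr 1
  ring

lemma dot_emb_sub_add (p : R2) (z w z' : Z2) :
    dotR p (emb (w - z)) + dotR p (emb (z' - w)) = dotR p (emb (z' - z)) := by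
  rw [← dotR_emb_add, sub_add_sub_cancel']

include hγ0 in
lemma exitP_tilt (n : ℕ) (z z' : Z2) :
    exitP (twKer γ a) A n z z'
      = ENNReal.ofReal (Real.exp (dotR a (emb (z' - z)))) * exitP (twKer γ 0) A n z z' := by
  induction n generalizing z with
  | zero =>
    by_cases hc : z' = z ∧ z ∉ A
    · rw [exitP, exitP, if_pos hc, mul_one, hc.1, sub_self, dotR_emb_zero,
        Real.exp_zero, ENNReal.ofReal_one]
    · rw [exitP, exitP, if_neg hc, mul_zero]
  | succ n ih =>
    rw [exitP, exitP]
    by_cases hzA : z ∈ A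
    · simp only [hzA, if_true]
      rw [← ENNReal.tsum_mul_left]
      refine tsum_congr fun w => ?_
      rw [ih, twKer_tilt γ a hγ0]
      calc ENNReal.ofReal (Real.exp (dotR a (emb (w - z)))) * twKer γ 0 z w
            * (ENNReal.ofReal (Real.exp (dotR a (emb (z' - w)))) * exitP (twKer γ 0) A n w z')
          = (ENNReal.ofReal (Real.exp (dotR a (emb (w - z))))
              * ENNReal.ofReal (Real.exp (dotR a (emb (z' - w)))))
            * (twKer γ 0 z w * exitP (twKer γ 0) A n w z') := by ring
        _ = ENNReal.ofReal (Real.exp (dotR a (emb (z' - z))))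
            * (twKer γ 0 z w * exitP (twKer γ 0) A n w z') := by
            rw [← ENNReal.ofReal_mul (Real.exp_pos _).le, ← Real.exp_add,
              dot_emb_sub_add]
    · simp [hzA]

include hγ0 in
lemma aliveP_tilt (n : ℕ) (z z' : Z2) :
    aliveP (twKer γ a) A n z z'
      = ENNReal.ofReal (Real.exp (dotR a (emb (z' - z)))) * aliveP (twKer γ 0) A n z z' := by
  induction n generalizing z with
  | zero =>
    by_cases hc : z' = z ∧ z ∈ A
    · rw [aliveP, aliveP, if_pos hc, mul_one, hc.1, sub_self, dotR_emb_zero,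
        Real.exp_zero, ENNReal.ofReal_one]
    · rw [aliveP, aliveP, if_neg hc, mul_zero]
  | succ n ih =>
    rw [aliveP, aliveP]
    by_cases hzA : z ∈ A
    · simp only [hzA, if_true]
      rw [← ENNReal.tsum_mul_left]
      refine tsum_congr fun w => ?_
      rw [ih, twKer_tilt γ a hγ0]
      calc ENNReal.ofReal (Real.exp (dotR a (emb (w - z)))) * twKer γ 0 z w
            * (ENNReal.ofReal (Real.exp (dotR a (emb (z' - w)))) * aliveP (twKer γ 0) A n w z')
          = (ENNReal.ofReal (Real.exp (dotR a (emb (w - z))))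
              * ENNReal.ofReal (Real.exp (dotR a (emb (z' - w)))))
            * (twKer γ 0 z w * aliveP (twKer γ 0) A n w z') := by ring
        _ = ENNReal.ofReal (Real.exp (dotR a (emb (z' - z))))
            * (twKer γ 0 z w * aliveP (twKer γ 0) A n w z') := by
            rw [← ENNReal.ofReal_mul (Real.exp_pos _).le, ← Real.exp_add,
              dot_emb_sub_add]
    · simp [hzA]

include hγ0 in
lemma twKer_rowsum (p : R2) (hs : Summable fun z : Z2 => γ z * Real.exp (dotR p (emb z)))
    (w : Z2) : ∑' z' : Z2, twKer γ p w z' = ENNReal.ofReal (jgf γ p) := by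
  rw [show (∑' z' : Z2, twKer γ p w z') = ∑' u : Z2, twKer γ p w (u + w) from
    ((Equiv.addRight w).tsum_eq (fun z' => twKer γ p w z')).symm]
  have hterm : ∀ u : Z2, twKer γ p w (u + w)
      = ENNReal.ofReal (γ u * Real.exp (dotR p (emb u))) := by
    intro u
    rw [twKer, add_sub_cancel_right]
  rw [tsum_congr hterm,
    ← ENNReal.ofReal_tsum_of_nonneg (fun u => mul_nonneg (hγ0 u) (Real.exp_pos _).le) hs]
  rfl

include hγ0 in
lemma twKer_weighted_rowsum (p fv : R2) (bb : ℝ)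
    (hs : Summable fun z : Z2 => γ z * Real.exp (dotR (p - bb • fv) (emb z))) (v : Z2) :
    ∑' z' : Z2, twKer γ p v z' * ENNReal.ofReal (Real.exp (-(bb * dotR fv (emb z'))))
      = ENNReal.ofReal (Real.exp (-(bb * dotR fv (emb v))))
        * ENNReal.ofReal (jgf γ (p - bb • fv)) := by
  rw [show (∑' z' : Z2, twKer γ p v z' * ENNReal.ofReal (Real.exp (-(bb * dotR fv (emb z')))))
      = ∑' u : Z2, twKer γ p v (u + v) * ENNReal.ofReal (Real.exp (-(bb * dotR fv (emb (u + v)))))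
    from ((Equiv.addRight v).tsum_eq
      (fun z' => twKer γ p v z' * ENNReal.ofReal (Real.exp (-(bb * dotR fv (emb z')))))).symm]
  have hterm : ∀ u : Z2,
      twKer γ p v (u + v) * ENNReal.ofReal (Real.exp (-(bb * dotR fv (emb (u + v)))))
        = ENNReal.ofReal (Real.exp (-(bb * dotR fv (emb v))))
          * ENNReal.ofReal (γ u * Real.exp (dotR (p - bb • fv) (emb u))) := by
    intro u
    rw [twKer, add_sub_cancel_right,
      ← ENNReal.ofReal_mul (mul_nonneg (hγ0 u) (Real.exp_pos _).le),
      ← ENNReal.ofReal_mul (Real.exp_pos _).le]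
    congr 1
    rw [dotR_emb_add, dotR_sub_smul]
    have e1 : Real.exp (-(bb * (dotR fv (emb u) + dotR fv (emb v))))
        = Real.exp (-(bb * dotR fv (emb u))) * Real.exp (-(bb * dotR fv (emb v))) := by
      rw [← Real.exp_add]; ring_nf
    have e2 : Real.exp (dotR p (emb u) - bb * dotR fv (emb u))
        = Real.exp (dotR p (emb u)) * Real.exp (-(bb * dotR fv (emb u))) := by
      rw [← Real.exp_add]; ring_nf
    rw [e1, e2]
    ring
  rw [tsum_congr hterm, ENNReal.tsum_mul_left,
    ← ENNReal.ofReal_tsum_of_nonneg (fun u => mul_nonneg (hγ0 u) (Real.exp_pos _).le) hs]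
  rfl

end Tilt

section JgfBound

variable {γ : Z2 → ℝ} (hγ0 : ∀ z : Z2, 0 ≤ γ z)
  (hA3 : ∀ p : R2, Summable fun z : Z2 => γ z * Real.exp (dotR p (emb z)))

include hγ0 hA3 in
lemma dot_grad (p fv : R2) :
    dotR fv (gradJgf γ p) = ∑' z : Z2, γ z * Real.exp (dotR p (emb z)) * dotR fv (emb z) := by
  have h1 : Summable (fun z : Z2 => γ z * Real.exp (dotR p (emb z)) * (z.1 : ℝ)) := by
    refine (sum_dot hγ0 hA3 p (1, 0)).congr fun z => ?_
    simp [dotR, emb]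
  have h2 : Summable (fun z : Z2 => γ z * Real.exp (dotR p (emb z)) * (z.2 : ℝ)) := by
    refine (sum_dot hγ0 hA3 p (0, 1)).congr fun z => ?_
    simp [dotR, emb]
  rw [gradJgf, dotR]
  simp only
  rw [← tsum_mul_left, ← tsum_mul_left,
    ← Summable.tsum_add (h1.mul_left fv.1) (h2.mul_left fv.2)]
  refine tsum_congr fun z => ?_
  simp only [dotR, emb]
  ring

include hγ0 hA3 in
lemma jgf_sub_bound (p fv : R2) (bb : ℝ) (hb0 : 0 ≤ bb) (hb1 : bb ≤ 1) :
    jgf γ (p - bb • fv) ≤ jgf γ p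
      - bb * (∑' z : Z2, γ z * Real.exp (dotR p (emb z)) * dotR fv (emb z))
      + 2 * bb^2 * (∑' z : Z2, γ z * Real.exp (dotR p (emb z)) * (dotR fv (emb z))^2
          * (Real.exp (dotR fv (emb z)) + Real.exp (-dotR fv (emb z)))) := by
  have hs1 := hA3 (p - bb • fv)
  have hsdot := sum_dot hγ0 hA3 p fv
  have hsq := sum_dotsq hγ0 hA3 p fv
  have hRHS : Summable (fun z : Z2 =>
      (γ z * Real.exp (dotR p (emb z)) - bb * (γ z * Real.exp (dotR p (emb z)) * dotR fv (emb z)))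
      + 2 * bb^2 * (γ z * Real.exp (dotR p (emb z)) * (dotR fv (emb z))^2
          * (Real.exp (dotR fv (emb z)) + Real.exp (-dotR fv (emb z))))) :=
    ((hA3 p).sub (hsdot.mul_left bb)).add (hsq.mul_left (2 * bb^2))
  have hpt : ∀ z : Z2, γ z * Real.exp (dotR (p - bb • fv) (emb z))
      ≤ (γ z * Real.exp (dotR p (emb z)) - bb * (γ z * Real.exp (dotR p (emb z)) * dotR fv (emb z)))
      + 2 * bb^2 * (γ z * Real.exp (dotR p (emb z)) * (dotR fv (emb z))^2
          * (Real.exp (dotR fv (emb z)) + Real.exp (-dotR fv (emb z)))) := by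
    intro z
    set t := dotR fv (emb z) with ht
    have hP : dotR (p - bb • fv) (emb z) = dotR p (emb z) - bb * t := dotR_sub_smul _ _ _ _
    have hq := exp_le_quad (-(bb * t))
    have hb1' : Real.exp (-(bb * t)) ≤ Real.exp t + Real.exp (-t) := by
      calc Real.exp (-(bb * t)) ≤ Real.exp |(-(bb * t))| :=
            Real.exp_le_exp.mpr (le_abs_self _)
        _ ≤ Real.exp |t| := by
            apply Real.exp_le_exp.mpr
            rw [abs_neg, abs_mul]
            calc |bb| * |t| ≤ 1 * |t| := by
                  apply mul_le_mul_of_nonneg_right _ (abs_nonneg t)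
                  rw [abs_of_nonneg hb0]; exact hb1
              _ = |t| := one_mul _
        _ ≤ _ := exp_abs_le t
    have hb2' : Real.exp (bb * t) ≤ Real.exp t + Real.exp (-t) := by
      calc Real.exp (bb * t) ≤ Real.exp |bb * t| := Real.exp_le_exp.mpr (le_abs_self _)
        _ ≤ Real.exp |t| := by
            apply Real.exp_le_exp.mpr
            rw [abs_mul]
            calc |bb| * |t| ≤ 1 * |t| := by
                  apply mul_le_mul_of_nonneg_right _ (abs_nonneg t)
                  rw [abs_of_nonneg hb0]; exact hb1
              _ = |t| := one_mul _
        _ ≤ _ := exp_abs_le t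
    have hquad : Real.exp (-(bb * t))
        ≤ 1 - bb * t + 2 * bb^2 * (t^2 * (Real.exp t + Real.exp (-t))) := by
      have h0 : (-(bb*t))^2 = bb^2 * t^2 := by ring
      have hsq2 : 0 ≤ bb^2 * t^2 := by positivity
      calc Real.exp (-(bb * t))
          ≤ 1 + (-(bb * t)) + (-(bb*t))^2 * (Real.exp (-(bb*t)) + Real.exp (-(-(bb*t)))) := hq
        _ ≤ 1 + (-(bb * t)) + bb^2 * t^2 * ((Real.exp t + Real.exp (-t))
              + (Real.exp t + Real.exp (-t))) := by
            rw [h0]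
            have : Real.exp (-(bb*t)) + Real.exp (-(-(bb*t)))
                ≤ (Real.exp t + Real.exp (-t)) + (Real.exp t + Real.exp (-t)) := by
              rw [neg_neg]
              exact add_le_add hb1' hb2'
            nlinarith [this, hsq2]
        _ = 1 - bb * t + 2 * bb^2 * (t^2 * (Real.exp t + Real.exp (-t))) := by ring
    have hnn : 0 ≤ γ z * Real.exp (dotR p (emb z)) := mul_nonneg (hγ0 z) (Real.exp_pos _).le
    have e2 : Real.exp (dotR p (emb z) - bb * t)
        = Real.exp (dotR p (emb z)) * Real.exp (-(bb * t)) := by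
      rw [← Real.exp_add]; ring_nf
    rw [hP, e2, ← mul_assoc]
    calc γ z * Real.exp (dotR p (emb z)) * Real.exp (-(bb * t))
        ≤ γ z * Real.exp (dotR p (emb z))
          * (1 - bb * t + 2 * bb^2 * (t^2 * (Real.exp t + Real.exp (-t)))) :=
          mul_le_mul_of_nonneg_left hquad hnn
      _ = _ := by ring
  calc jgf γ (p - bb • fv) ≤ _ := Summable.tsum_le_tsum hpt hs1 hRHS
    _ = _ := by
        rw [Summable.tsum_add ((hA3 p).sub (hsdot.mul_left bb)) (hsq.mul_left (2 * bb^2)),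
          Summable.tsum_sub (hA3 p) (hsdot.mul_left bb), tsum_mul_left, tsum_mul_left]
        rfl

end JgfBound
/-- For every `a` in the interior of `Γ` (i.e. `a ∈ ∂D` with `q(a) ∈ K`) and every
`z ∈ K`: `ℙ_z(τ_a = ∞) > 0`, i.e. the twisted walk started at `z` stays in `K` forever
with positive probability; equivalently `𝔼_z[e^{a·(S(τ)−z)}; τ < ∞] < 1`. -/
theorem interior_twisted_survival_pos
    (γ : Z2 → ℝ) (c f : Fin 2 → R2) (K : Set R2)
    -- `γ` is a probability distribution on `ℤ²`
    (hγ0 : ∀ z : Z2, 0 ≤ γ z) (hγ1 : HasSum γ 1)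
    -- `c 0, c 1` are unit vectors, `f i` is the unit vector perpendicular to `c i`
    -- pointing into the cone; the angle between `c 0` and `c 1` lies in `(0, π)`
    (hcUnit : ∀ i, nrm (c i) = 1) (hfUnit : ∀ i, nrm (f i) = 1)
    (hperp : ∀ i, dotR (f i) (c i) = 0)
    (hinward : ∀ i j, i ≠ j → 0 < dotR (f i) (c j))
    -- `K` is the open convex cone bounded by the rays through `c 0` and `c 1`
    (hK : K = {x : R2 | ∀ i, 0 < dotR (f i) x})
    -- (A1) the walk is irreducible with nonzero mean
    (hA1 : ∀ z z' : Z2, ∃ n : ℕ, 0 < nstep (twKer γ 0) n z z')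
    (hmean : (∑' z : Z2, γ z * (z.1 : ℝ), ∑' z : Z2, γ z * (z.2 : ℝ)) ≠ (0, 0))
    -- (A2) the walk killed when leaving `K` is irreducible in `K`
    (hA2 : ∀ z z' : Z2, emb z ∈ K → emb z' ∈ K →
        ∃ n : ℕ, 0 < aliveP (twKer γ 0) (emb ⁻¹' K) n z z')
    -- (A3) the jump generating function is finite everywhere
    (hA3 : ∀ a : R2, Summable fun z : Z2 => γ z * Real.exp (dotR a (emb z)))
    -- (A4) the projections `fᵢ·S(n)` are aperiodic random walks
    (hA4 : ∀ i : Fin 2, ∀ d : ℕ,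
        (∀ n : ℕ, 0 < n →
          0 < ∑' z : Z2, (if dotR (f i) (emb z) = 0 then nstep (twKer γ 0) n 0 z else 0) →
          d ∣ n) → d = 1)
    -- `a` in the interior of `Γ`
    (a : R2) (haD : jgf γ a = 1) (haq : qmap γ a ∈ K)
    (z : Z2) (hz : emb z ∈ K) :
    exitTotal (twKer γ a) (emb ⁻¹' K) z < 1 ∧
    exitLExp (twKer γ 0) (emb ⁻¹' K) z
        (fun z' => Real.exp (dotR a (emb (z' - z)))) < 1 := by
  classical
  set A : Set Z2 := emb ⁻¹' K with hAdef
  have hmemA : ∀ w : Z2, w ∈ A ↔ ∀ i, 0 < dotR (f i) (emb w) := by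
    intro w
    rw [hAdef, Set.mem_preimage, hK]
    exact Iff.rfl
  have hrow : ∀ w : Z2, ∑' z' : Z2, twKer γ a w z' = 1 := by
    intro w
    rw [twKer_rowsum γ hγ0 a (hA3 a) w, haD, ENNReal.ofReal_one]
  -- drift positivity
  have hgradpos : ∀ i, 0 < dotR (f i) (gradJgf γ a) := by
    intro i
    have hmem : qmap γ a ∈ {x : R2 | ∀ i, 0 < dotR (f i) x} := hK ▸ haq
    have h := hmem i
    rw [qmap, dotR_smul_right] at h
    have hninv : 0 ≤ (nrm (gradJgf γ a))⁻¹ := by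
      rw [nrm]; exact inv_nonneg.mpr (Real.sqrt_nonneg _)
    rcases mul_pos_iff.mp h with ⟨_, h2⟩ | ⟨h1, _⟩
    · exact h2
    · exact absurd h1 (not_lt.mpr hninv)
  set L : Fin 2 → ℝ := fun i => ∑' z : Z2, γ z * Real.exp (dotR a (emb z)) * dotR (f i) (emb z)
    with hLdef
  have hL : ∀ i, 0 < L i := by
    intro i
    have h := hgradpos i
    rwa [dot_grad hγ0 hA3 a (f i)] at h
  set C : Fin 2 → ℝ := fun i => ∑' z : Z2, γ z * Real.exp (dotR a (emb z))
      * (dotR (f i) (emb z))^2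
      * (Real.exp (dotR (f i) (emb z)) + Real.exp (-dotR (f i) (emb z))) with hCdef
  have hC : ∀ i, 0 ≤ C i := by
    intro i
    apply tsum_nonneg
    intro w
    have h1 : 0 ≤ γ w := hγ0 w
    have h2 : 0 ≤ Real.exp (dotR (f i) (emb w)) + Real.exp (-dotR (f i) (emb w)) := by
      positivity
    positivity
  set b : ℝ := min 1 (min (L 0 / (4 * C 0 + 2)) (L 1 / (4 * C 1 + 2))) with hbdef
  have hden : ∀ i, (0:ℝ) < 4 * C i + 2 := fun i => by have := hC i; linarith
  have hb0 : 0 < b :=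
    lt_min one_pos (lt_min (div_pos (hL 0) (hden 0)) (div_pos (hL 1) (hden 1)))
  have hb1 : b ≤ 1 := min_le_left _ _
  have hble : ∀ i, b ≤ L i / (4 * C i + 2) := by
    intro i
    fin_cases i
    · exact le_trans (min_le_right _ _) (min_le_left _ _)
    · exact le_trans (min_le_right _ _) (min_le_right _ _)
  have hrho : ∀ i, jgf γ (a - b • f i) ≤ 1 - b * L i / 2 := by
    intro i
    have hbound := jgf_sub_bound hγ0 hA3 a (f i) b hb0.le hb1
    rw [haD] at hbound
    have h4 : b * (4 * C i + 2) ≤ L i := (le_div_iff₀ (hden i)).mp (hble i)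
    have h5 : b * (b * (4 * C i + 2)) ≤ b * L i := mul_le_mul_of_nonneg_left h4 hb0.le
    have h6 : 2 * b^2 * C i ≤ b * L i / 2 := by nlinarith [sq_nonneg b]
    calc jgf γ (a - b • f i) ≤ 1 - b * L i + 2 * b^2 * C i := by
          simp only [hLdef, hCdef]
          exact hbound
      _ ≤ 1 - b * L i / 2 := by linarith
  set Lmin : ℝ := min (L 0) (L 1) with hLmindef
  have hLminpos : 0 < Lmin := lt_min (hL 0) (hL 1)
  set q : ℝ := max (1 - b * Lmin / 2) 0 with hqdef
  have hq0 : 0 ≤ q := le_max_right _ _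
  have hq1 : q < 1 := by
    apply max_lt _ one_pos
    have : 0 < b * Lmin / 2 := by positivity
    linarith
  have hrhoq : ∀ i, jgf γ (a - b • f i) ≤ q := by
    intro i
    refine le_trans (hrho i) (le_trans ?_ (le_max_left _ _))
    have hmin : Lmin ≤ L i := by
      fin_cases i
      · exact min_le_left _ _
      · exact min_le_right _ _
    nlinarith [mul_le_mul_of_nonneg_left hmin hb0.le]
  set Q : ℝ≥0∞ := ENNReal.ofReal q with hQdef
  have hQ1 : Q < 1 := ENNReal.ofReal_lt_one.mpr hq1
  have hQle1 : Q ≤ 1 := hQ1.le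
  set U : Z2 → ℝ≥0∞ := fun w =>
    ENNReal.ofReal (Real.exp (-(b * dotR (f 0) (emb w))))
      + ENNReal.ofReal (Real.exp (-(b * dotR (f 1) (emb w)))) with hUdef
  have hUout : ∀ w : Z2, w ∉ A → 1 ≤ U w := by
    intro w hw
    have hex : ∃ i, dotR (f i) (emb w) ≤ 0 := by
      by_contra hcon
      push_neg at hcon
      exact hw ((hmemA w).mpr hcon)
    obtain ⟨i, hi⟩ := hex
    have h1 : (1:ℝ≥0∞) ≤ ENNReal.ofReal (Real.exp (-(b * dotR (f i) (emb w)))) := by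
      rw [← ENNReal.ofReal_one]
      apply ENNReal.ofReal_le_ofReal
      apply Real.one_le_exp
      nlinarith [hb0.le]
    have h2 : ENNReal.ofReal (Real.exp (-(b * dotR (f i) (emb w)))) ≤ U w := by
      simp only [hUdef]
      fin_cases i
      · exact le_self_add
      · exact le_add_self
    exact le_trans h1 h2
  have hstepU : ∀ v : Z2, (∑' z' : Z2, twKer γ a v z' * U z') ≤ Q * U v := by
    intro v
    have hs0 := twKer_weighted_rowsum γ hγ0 a (f 0) b (hA3 (a - b • f 0)) v
    have hs1 := twKer_weighted_rowsum γ hγ0 a (f 1) b (hA3 (a - b • f 1)) v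
    calc ∑' z' : Z2, twKer γ a v z' * U z'
        = (∑' z' : Z2, twKer γ a v z'
              * ENNReal.ofReal (Real.exp (-(b * dotR (f 0) (emb z')))))
          + ∑' z' : Z2, twKer γ a v z'
              * ENNReal.ofReal (Real.exp (-(b * dotR (f 1) (emb z')))) := by
          rw [← ENNReal.tsum_add]
          refine tsum_congr fun z' => ?_
          simp only [hUdef]
          ring
      _ = ENNReal.ofReal (Real.exp (-(b * dotR (f 0) (emb v))))
              * ENNReal.ofReal (jgf γ (a - b • f 0))
          + ENNReal.ofReal (Real.exp (-(b * dotR (f 1) (emb v))))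
              * ENNReal.ofReal (jgf γ (a - b • f 1)) := by
          rw [hs0, hs1]
      _ ≤ ENNReal.ofReal (Real.exp (-(b * dotR (f 0) (emb v)))) * Q
          + ENNReal.ofReal (Real.exp (-(b * dotR (f 1) (emb v)))) * Q := by
          gcongr
          · exact ENNReal.ofReal_le_ofReal (hrhoq 0)
          · exact ENNReal.ofReal_le_ofReal (hrhoq 1)
      _ = Q * U v := by
          simp only [hUdef]
          ring
  -- deep starting point w₀
  have htz : ∀ i, 0 < dotR (f i) (emb z) := by
    have : z ∈ A := by rw [hAdef]; exact hz
    exact (hmemA z).mp this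
  set r : ℝ := max (Real.exp (-(b * dotR (f 0) (emb z))))
    (Real.exp (-(b * dotR (f 1) (emb z)))) with hrdef
  have hr0 : 0 ≤ r := le_trans (Real.exp_pos _).le (le_max_left _ _)
  have hr1 : r < 1 := by
    apply max_lt
    · apply Real.exp_lt_one_iff.mpr
      nlinarith [htz 0]
    · apply Real.exp_lt_one_iff.mpr
      nlinarith [htz 1]
  obtain ⟨M₀, hM₀⟩ := exists_pow_lt_of_lt_one (show (0:ℝ) < (1 - q)/2 by linarith) hr1
  set M : ℕ := M₀ + 1 with hMdef
  have hrM : r ^ M < (1 - q) / 2 :=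
    lt_of_le_of_lt (pow_le_pow_of_le_one hr0 hr1.le (Nat.le_succ _)) hM₀
  set w₀ : Z2 := ((M : ℤ) * z.1, (M : ℤ) * z.2) with hw₀def
  have hw₀t : ∀ i, dotR (f i) (emb w₀) = (M : ℝ) * dotR (f i) (emb z) := by
    intro i
    simp only [hw₀def, dotR, emb]
    push_cast
    ring
  have hMpos : (0:ℝ) < (M:ℝ) := by
    rw [hMdef]
    positivity
  have hw₀A : w₀ ∈ A := (hmemA w₀).mpr fun i => by
    rw [hw₀t i]; exact mul_pos hMpos (htz i)
  have hexpM : ∀ i, Real.exp (-(b * dotR (f i) (emb w₀))) ≤ r ^ M := by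
    intro i
    rw [hw₀t i, show -(b * ((M:ℝ) * dotR (f i) (emb z)))
        = (M:ℝ) * (-(b * dotR (f i) (emb z))) from by ring,
      Real.exp_nat_mul]
    apply pow_le_pow_left₀ (Real.exp_pos _).le
    fin_cases i
    · exact le_max_left _ _
    · exact le_max_right _ _
  have hU₀ : U w₀ ≤ ENNReal.ofReal (2 * r ^ M) := by
    simp only [hUdef]
    calc ENNReal.ofReal (Real.exp (-(b * dotR (f 0) (emb w₀))))
          + ENNReal.ofReal (Real.exp (-(b * dotR (f 1) (emb w₀))))
        ≤ ENNReal.ofReal (r ^ M) + ENNReal.ofReal (r ^ M) :=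
          add_le_add (ENNReal.ofReal_le_ofReal (hexpM 0)) (ENNReal.ofReal_le_ofReal (hexpM 1))
      _ = ENNReal.ofReal (2 * r ^ M) := by
          rw [← ENNReal.ofReal_add (by positivity) (by positivity)]
          ring_nf
  -- supermartingale estimates
  have hAm : ∀ m : ℕ, (∑' w : Z2, aliveP (twKer γ a) A m w₀ w * U w) ≤ Q ^ m * U w₀ := by
    intro m
    induction m with
    | zero =>
      rw [pow_zero, one_mul]
      rw [show (∑' w : Z2, aliveP (twKer γ a) A 0 w₀ w * U w)
          = ∑' w : Z2, (if w = w₀ then U w₀ else 0) from tsum_congr fun w => by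
        by_cases hw : w = w₀
        · subst hw; rw [aliveP, if_pos ⟨rfl, hw₀A⟩, one_mul, if_pos rfl]
        · rw [aliveP, if_neg (fun (hc : w = w₀ ∧ w₀ ∈ A) => hw hc.1), zero_mul, if_neg hw]]
      rw [tsum_ite_eq]
    | succ m ih =>
      calc ∑' w : Z2, aliveP (twKer γ a) A (m+1) w₀ w * U w
          ≤ ∑' w : Z2, (∑' v : Z2, aliveP (twKer γ a) A m w₀ v * twKer γ a v w) * U w := by
            refine ENNReal.tsum_le_tsum (fun w => ?_)
            rw [aliveP_succ_right]
            split_ifs with hw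
            · exact le_rfl
            · rw [zero_mul]
              exact zero_le
        _ = ∑' v : Z2, aliveP (twKer γ a) A m w₀ v * (∑' w : Z2, twKer γ a v w * U w) := by
            calc ∑' w : Z2, (∑' v : Z2, aliveP (twKer γ a) A m w₀ v * twKer γ a v w) * U w
                = ∑' w : Z2, ∑' v : Z2, aliveP (twKer γ a) A m w₀ v * (twKer γ a v w * U w) := by
                  refine tsum_congr fun w => ?_
                  rw [← ENNReal.tsum_mul_right]
                  exact tsum_congr fun v => by ring
              _ = ∑' v : Z2, ∑' w : Z2, aliveP (twKer γ a) A m w₀ v * (twKer γ a v w * U w) :=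
                  ENNReal.tsum_comm
              _ = _ := tsum_congr fun v => ENNReal.tsum_mul_left
        _ ≤ ∑' v : Z2, aliveP (twKer γ a) A m w₀ v * (Q * U v) :=
            ENNReal.tsum_le_tsum (fun v => mul_le_mul_right (hstepU v) _)
        _ = Q * ∑' v : Z2, aliveP (twKer γ a) A m w₀ v * U v := by
            rw [← ENNReal.tsum_mul_left]
            exact tsum_congr fun v => by ring
        _ ≤ Q * (Q ^ m * U w₀) := mul_le_mul_right ih _
        _ = Q ^ (m+1) * U w₀ := by rw [pow_succ]; ring
  have hEm : ∀ m : ℕ, (∑' z' : Z2, exitP (twKer γ a) A (m+1) w₀ z') ≤ Q ^ (m+1) * U w₀ := by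
    intro m
    calc ∑' z' : Z2, exitP (twKer γ a) A (m+1) w₀ z'
        ≤ ∑' z' : Z2, (∑' v : Z2, aliveP (twKer γ a) A m w₀ v * twKer γ a v z') * U z' := by
          refine ENNReal.tsum_le_tsum (fun z' => ?_)
          rw [exitP_succ_right]
          by_cases hz' : z' ∈ A
          · rw [if_neg (not_not_intro hz')]
            exact zero_le
          · rw [if_pos hz']
            calc (∑' v : Z2, aliveP (twKer γ a) A m w₀ v * twKer γ a v z')
                = (∑' v : Z2, aliveP (twKer γ a) A m w₀ v * twKer γ a v z') * 1 :=
                  (mul_one _).symm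
              _ ≤ _ := mul_le_mul_right (hUout z' hz') _
      _ = ∑' v : Z2, aliveP (twKer γ a) A m w₀ v * (∑' w : Z2, twKer γ a v w * U w) := by
          calc ∑' z' : Z2, (∑' v : Z2, aliveP (twKer γ a) A m w₀ v * twKer γ a v z') * U z'
              = ∑' z' : Z2, ∑' v : Z2, aliveP (twKer γ a) A m w₀ v * (twKer γ a v z' * U z') := by
                refine tsum_congr fun z' => ?_
                rw [← ENNReal.tsum_mul_right]
                exact tsum_congr fun v => by ring
            _ = ∑' v : Z2, ∑' z' : Z2, aliveP (twKer γ a) A m w₀ v * (twKer γ a v z' * U z') :=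
                ENNReal.tsum_comm
            _ = _ := tsum_congr fun v => ENNReal.tsum_mul_left
      _ ≤ ∑' v : Z2, aliveP (twKer γ a) A m w₀ v * (Q * U v) :=
          ENNReal.tsum_le_tsum (fun v => mul_le_mul_right (hstepU v) _)
      _ = Q * ∑' v : Z2, aliveP (twKer γ a) A m w₀ v * U v := by
          rw [← ENNReal.tsum_mul_left]
          exact tsum_congr fun v => by ring
      _ ≤ Q * (Q ^ m * U w₀) := mul_le_mul_right (hAm m) _
      _ = Q ^ (m+1) * U w₀ := by rw [pow_succ]; ring
  -- exitTotal at w₀ is < 1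
  have hQw₀ : exitTotal (twKer γ a) A w₀ < 1 := by
    have hE0 : (∑' z' : Z2, exitP (twKer γ a) A 0 w₀ z') = 0 := by
      rw [show (∑' z' : Z2, exitP (twKer γ a) A 0 w₀ z') = ∑' z' : Z2, (0:ℝ≥0∞) from
        tsum_congr fun z' => by rw [exitP, if_neg (fun hc => hc.2 hw₀A)]]
      simp
    have hsplit := tsum_eq_zero_add'
      (f := fun m => ∑' z' : Z2, exitP (twKer γ a) A m w₀ z') ENNReal.summable
    have hbound : exitTotal (twKer γ a) A w₀ ≤ (∑' m : ℕ, Q ^ (m+1)) * U w₀ := by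
      rw [exitTotal, hsplit, hE0, zero_add, ← ENNReal.tsum_mul_right]
      exact ENNReal.tsum_le_tsum (fun m => hEm m)
    have hgeom : (∑' m : ℕ, Q ^ (m+1)) = (1 - Q)⁻¹ * Q := by
      calc ∑' m : ℕ, Q ^ (m+1) = ∑' m : ℕ, Q ^ m * Q := tsum_congr fun m => pow_succ Q m
        _ = (∑' m : ℕ, Q ^ m) * Q := ENNReal.tsum_mul_right
        _ = (1 - Q)⁻¹ * Q := by rw [ENNReal.tsum_geometric]
    have h1mQ : (1 : ℝ≥0∞) - Q = ENNReal.ofReal (1 - q) := by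
      rw [hQdef, ← ENNReal.ofReal_one]
      exact (ENNReal.ofReal_sub 1 hq0).symm
    have h1q : (0:ℝ) < 1 - q := by linarith
    refine lt_of_le_of_lt hbound ?_
    rw [hgeom]
    calc (1 - Q)⁻¹ * Q * U w₀ ≤ (1 - Q)⁻¹ * 1 * U w₀ := by gcongr
      _ = (1 - Q)⁻¹ * U w₀ := by rw [mul_one]
      _ ≤ ENNReal.ofReal ((1-q)⁻¹) * ENNReal.ofReal (2 * r ^ M) := by
          rw [h1mQ, ENNReal.ofReal_inv_of_pos h1q]
          exact mul_le_mul_right hU₀ _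
      _ = ENNReal.ofReal ((1-q)⁻¹ * (2 * r ^ M)) := by
          rw [← ENNReal.ofReal_mul (by positivity)]
      _ < 1 := by
          apply ENNReal.ofReal_lt_one.mpr
          have hlt : (1-q)⁻¹ * (2 * r ^ M) < (1-q)⁻¹ * (1 - q) := by
            apply mul_lt_mul_of_pos_left _ (inv_pos.mpr h1q)
            linarith
          rwa [inv_mul_cancel₀ (ne_of_gt h1q)] at hlt
  -- transfer to z via irreducibility
  obtain ⟨n, hn⟩ := hA2 z w₀ hz (by rw [hAdef] at hw₀A; exact hw₀A)
  have hn' : 0 < aliveP (twKer γ 0) A n z w₀ := by rw [hAdef]; exact hn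
  have hpos : 0 < aliveP (twKer γ a) A n z w₀ := by
    rw [aliveP_tilt γ a A hγ0 n z w₀]
    exact ENNReal.mul_pos (ENNReal.ofReal_pos.mpr (Real.exp_pos _)).ne' hn'.ne'
  have hTle : ∀ w, exitTotal (twKer γ a) A w ≤ 1 := exitTotal_le_one (twKer γ a) A hrow
  have hdecomp := exitTotal_decomp (twKer γ a) A hrow n z
  have hcons := conservation (twKer γ a) A hrow n z
  have hkey : exitTotal (twKer γ a) A z
      + aliveP (twKer γ a) A n z w₀ * (1 - exitTotal (twKer γ a) A w₀) ≤ 1 := by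
    have hsum2 : (∑' w : Z2, aliveP (twKer γ a) A n z w * exitTotal (twKer γ a) A w)
        + aliveP (twKer γ a) A n z w₀ * (1 - exitTotal (twKer γ a) A w₀)
        ≤ ∑' w : Z2, aliveP (twKer γ a) A n z w := by
      have hterm : ∀ w : Z2, aliveP (twKer γ a) A n z w * exitTotal (twKer γ a) A w
          + (if w = w₀ then aliveP (twKer γ a) A n z w₀
              * (1 - exitTotal (twKer γ a) A w₀) else 0)
          ≤ aliveP (twKer γ a) A n z w := by
        intro w
        by_cases hw : w = w₀
        · subst hw
          rw [if_pos rfl, ← mul_add]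
          rw [show exitTotal (twKer γ a) A w₀ + (1 - exitTotal (twKer γ a) A w₀) = 1 from by
            rw [add_comm]; exact tsub_add_cancel_of_le hQw₀.le]
          rw [mul_one]
        · rw [if_neg hw, add_zero]
          calc aliveP (twKer γ a) A n z w * exitTotal (twKer γ a) A w
              ≤ aliveP (twKer γ a) A n z w * 1 := mul_le_mul_right (hTle w) _
            _ = _ := mul_one _
      calc (∑' w : Z2, aliveP (twKer γ a) A n z w * exitTotal (twKer γ a) A w)
            + aliveP (twKer γ a) A n z w₀ * (1 - exitTotal (twKer γ a) A w₀)
          = ∑' w : Z2, (aliveP (twKer γ a) A n z w * exitTotal (twKer γ a) A w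
            + (if w = w₀ then aliveP (twKer γ a) A n z w₀
                * (1 - exitTotal (twKer γ a) A w₀) else 0)) := by
            rw [ENNReal.tsum_add]
            congr 1
            rw [tsum_ite_eq]
        _ ≤ ∑' w : Z2, aliveP (twKer γ a) A n z w :=
            ENNReal.tsum_le_tsum hterm
    calc exitTotal (twKer γ a) A z
        + aliveP (twKer γ a) A n z w₀ * (1 - exitTotal (twKer γ a) A w₀)
        = (∑ m ∈ Finset.range (n+1), ∑' z' : Z2, exitP (twKer γ a) A m z z')
          + ((∑' w : Z2, aliveP (twKer γ a) A n z w * exitTotal (twKer γ a) A w)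
            + aliveP (twKer γ a) A n z w₀ * (1 - exitTotal (twKer γ a) A w₀)) := by
          rw [hdecomp, add_assoc]
      _ ≤ (∑ m ∈ Finset.range (n+1), ∑' z' : Z2, exitP (twKer γ a) A m z z')
          + ∑' w : Z2, aliveP (twKer γ a) A n z w := add_le_add le_rfl hsum2
      _ = 1 := hcons
  have hppos : 0 < aliveP (twKer γ a) A n z w₀ * (1 - exitTotal (twKer γ a) A w₀) := by
    apply ENNReal.mul_pos hpos.ne'
    intro hc
    rw [tsub_eq_zero_iff_le] at hc
    exact absurd hc (not_le.mpr hQw₀)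
  have hfinal1 : exitTotal (twKer γ a) A z < 1 := by
    have hne : exitTotal (twKer γ a) A z ≠ ⊤ :=
      (lt_of_le_of_lt (hTle z) ENNReal.one_lt_top).ne
    calc exitTotal (twKer γ a) A z
        < exitTotal (twKer γ a) A z
          + aliveP (twKer γ a) A n z w₀ * (1 - exitTotal (twKer γ a) A w₀) :=
          ENNReal.lt_add_right hne hppos.ne'
      _ ≤ 1 := hkey
  constructor
  · exact hfinal1
  · have hEq : exitLExp (twKer γ 0) A z (fun z' => Real.exp (dotR a (emb (z' - z))))
        = exitTotal (twKer γ a) A z := by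
      rw [exitLExp, exitTotal]
      refine tsum_congr fun m => tsum_congr fun z' => ?_
      rw [exitP_tilt γ a A hγ0 m z z', mul_comm]
    rw [hEq]
    exact hfinal1

end KilledRW
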